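/- arXiv:2004.00041 — 2 statements merged into one kernel-verified Lean document; each statement's English description precedes it below -/
import Mathlib

section
/- Stability of strongly convex local minimizers: Let θ0 ∈ ℝ^d, ε > 0, and let f1, f2 : B_ε(θ0) → ℝ be twice continuously differentiable. Suppose θ0 is a critical point of f1 (∇f1(θ0) = 0) and λ_min(∇²f1(θ)) ≥ c0 for some c0 > 0 and all θ ∈ B_ε(θ0). If |f1(θ) − f2(θ)| ≤ δ and ‖∇²f1(θ) − ∇²f2(θ)‖ ≤ δ for some δ < min(c0, c0 ε²/4) and all θ ∈ B_ε(θ0), then f2 has a unique critical point in B_ε(θ0), and this critical point is a local minimizer of f2. -/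
open MeasureTheory Matrix
open scoped RealInnerProductSpace BigOperators

noncomputable section

variable {d : ℕ}

theorem grad_inner (f : EuclideanSpace ℝ (Fin d) → ℝ) (x v : EuclideanSpace ℝ (Fin d)) :
    ⟪gradient f x, v⟫ = fderiv ℝ f x v := by
  rw [← InnerProductSpace.toDual_apply_apply, gradient, LinearIsometryEquiv.apply_symm_apply]

theorem grad_diffOn {f : EuclideanSpace ℝ (Fin d) → ℝ} {s : Set (EuclideanSpace ℝ (Fin d))}
    (hs : IsOpen s) (hf : ContDiffOn ℝ 2 f s) :
    ∀ x ∈ s, DifferentiableAt ℝ (gradient f) x := by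
  intro x hx
  have hg : ContDiffOn ℝ 1 (fderiv ℝ f) s := hf.fderiv_of_isOpen hs (by norm_num)
  have h1 : DifferentiableAt ℝ (fderiv ℝ f) x :=
    ((hg.differentiableOn one_ne_zero) x hx).differentiableAt (hs.mem_nhds hx)
  exact ((InnerProductSpace.toDual ℝ
    (EuclideanSpace ℝ (Fin d))).symm.toContinuousLinearEquiv.differentiableAt).comp x h1

theorem taylor_lb (f : EuclideanSpace ℝ (Fin d) → ℝ) (s : Set (EuclideanSpace ℝ (Fin d)))
    (hs : IsOpen s) (hsc : Convex ℝ s) (hf : ContDiffOn ℝ 2 f s) (c : ℝ)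
    (hH : ∀ θ ∈ s, ∀ v, c * ‖v‖ ^ 2 ≤ ⟪v, fderiv ℝ (gradient f) θ v⟫)
    (a b : EuclideanSpace ℝ (Fin d)) (ha : a ∈ s) (hb : b ∈ s) :
    f a + ⟪gradient f a, b - a⟫ + c / 2 * ‖b - a‖ ^ 2 ≤ f b := by
  set w := b - a with hw
  set γ : ℝ → EuclideanSpace ℝ (Fin d) := fun t => a + t • w with hγ
  have hγs : ∀ t ∈ Set.Icc (0:ℝ) 1, γ t ∈ s := fun t ht => hsc.add_smul_sub_mem ha hb ht
  have hγd : ∀ t : ℝ, HasDerivAt γ w t := by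
    intro t
    simpa [hγ] using ((hasDerivAt_id t).smul_const w).const_add a
  have hdf : DifferentiableOn ℝ f s := hf.differentiableOn (by norm_num)
  set p : ℝ → ℝ := fun t => ⟪gradient f (γ t), w⟫ with hp
  set g : ℝ → ℝ := fun t => f (γ t) with hg
  have hgd : ∀ t ∈ Set.Icc (0:ℝ) 1, HasDerivAt g (p t) t := by
    intro t ht
    have hx := hγs t ht
    have hfd : HasFDerivAt f (fderiv ℝ f (γ t)) (γ t) :=
      ((hdf (γ t) hx).differentiableAt (hs.mem_nhds hx)).hasFDerivAt
    have h1 := hfd.comp_hasDerivAt t (hγd t)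
    have h2 : p t = fderiv ℝ f (γ t) w := grad_inner f (γ t) w
    rw [h2]
    exact h1
  have hpd : ∀ t ∈ Set.Icc (0:ℝ) 1,
      HasDerivAt p (⟪gradient f (γ t), (0:EuclideanSpace ℝ (Fin d))⟫
        + ⟪fderiv ℝ (gradient f) (γ t) w, w⟫) t := by
    intro t ht
    have hx := hγs t ht
    have hGd : HasFDerivAt (gradient f) (fderiv ℝ (gradient f) (γ t)) (γ t) :=
      (grad_diffOn hs hf (γ t) hx).hasFDerivAt
    have h1 : HasDerivAt (fun t => gradient f (γ t)) (fderiv ℝ (gradient f) (γ t) w) t :=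
      hGd.comp_hasDerivAt t (hγd t)
    exact h1.inner ℝ (hasDerivAt_const t w)
  have hpd' : ∀ t ∈ Set.Icc (0:ℝ) 1,
      HasDerivAt p (⟪fderiv ℝ (gradient f) (γ t) w, w⟫) t := by
    intro t ht
    have h1 := hpd t ht
    rw [inner_zero_right, zero_add] at h1
    exact h1
  -- q t := p t - p 0 - c * ‖w‖^2 * t is nonneg on [0,1]
  set q : ℝ → ℝ := fun t => p t - p 0 - c * ‖w‖ ^ 2 * t with hq
  have hqd : ∀ t ∈ Set.Icc (0:ℝ) 1,
      HasDerivAt q (⟪fderiv ℝ (gradient f) (γ t) w, w⟫ - c * ‖w‖ ^ 2) t := by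
    intro t ht
    have h3 : HasDerivAt (fun t : ℝ => c * ‖w‖ ^ 2 * t) (c * ‖w‖ ^ 2) t := by
      simpa using (hasDerivAt_id t).const_mul (c * ‖w‖ ^ 2)
    exact ((hpd' t ht).sub_const (p 0)).sub h3
  have hqmono : MonotoneOn q (Set.Icc (0:ℝ) 1) := by
    apply monotoneOn_of_deriv_nonneg (convex_Icc 0 1)
    · exact fun t ht => ((hqd t ht).continuousAt).continuousWithinAt
    · intro t ht
      rw [interior_Icc] at ht
      exact ((hqd t (Set.mem_Icc_of_Ioo ht)).differentiableAt).differentiableWithinAt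
    · intro t ht
      rw [interior_Icc] at ht
      rw [(hqd t (Set.mem_Icc_of_Ioo ht)).deriv]
      have := hH (γ t) (hγs t (Set.mem_Icc_of_Ioo ht)) w
      have h2 : ⟪w, fderiv ℝ (gradient f) (γ t) w⟫ = ⟪fderiv ℝ (gradient f) (γ t) w, w⟫ :=
        real_inner_comm _ _
      linarith [h2 ▸ this]
  have hqnn : ∀ t ∈ Set.Icc (0:ℝ) 1, 0 ≤ q t := by
    intro t ht
    have := hqmono (Set.left_mem_Icc.mpr one_pos.le) ht ht.1
    simpa [hq] using this
  -- h t := g t - p 0 * t - c*‖w‖^2*t^2/2 is monotone on [0,1]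
  set h : ℝ → ℝ := fun t => g t - p 0 * t - c * ‖w‖ ^ 2 * t ^ 2 / 2 with hh
  have hhd : ∀ t ∈ Set.Icc (0:ℝ) 1, HasDerivAt h (q t) t := by
    intro t ht
    have h1 : HasDerivAt (fun t : ℝ => c * ‖w‖ ^ 2 * t ^ 2 / 2) (c * ‖w‖ ^ 2 * t) t := by
      have := ((hasDerivAt_pow 2 t).const_mul (c * ‖w‖ ^ 2)).div_const 2
      exact this.congr_deriv (by rw [show (2:ℕ) - 1 = 1 from rfl]; push_cast; ring)
    have h4 : HasDerivAt (fun t : ℝ => p 0 * t) (p 0) t := by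
      simpa using (hasDerivAt_id t).const_mul (p 0)
    have h5 := ((hgd t ht).sub h4).sub h1
    have h6 : p t - p 0 - c * ‖w‖ ^ 2 * t = q t := rfl
    rw [h6] at h5
    exact h5
  have hhmono : MonotoneOn h (Set.Icc (0:ℝ) 1) := by
    apply monotoneOn_of_deriv_nonneg (convex_Icc 0 1)
    · exact fun t ht => ((hhd t ht).continuousAt).continuousWithinAt
    · intro t ht
      rw [interior_Icc] at ht
      exact ((hhd t (Set.mem_Icc_of_Ioo ht)).differentiableAt).differentiableWithinAt
    · intro t ht
      rw [interior_Icc] at ht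
      rw [(hhd t (Set.mem_Icc_of_Ioo ht)).deriv]
      exact hqnn t (Set.mem_Icc_of_Ioo ht)
  have hfin := hhmono (Set.left_mem_Icc.mpr one_pos.le) (Set.right_mem_Icc.mpr one_pos.le)
    zero_le_one
  have hg0 : g 0 = f a := by simp [hg, hγ]
  have hg1 : g 1 = f b := by simp [hg, hγ, hw]
  have hp0 : p 0 = ⟪gradient f a, b - a⟫ := by simp [hp, hγ, hw]
  simp only [hh, hg0, hg1, hp0] at hfin
  nlinarith [hfin]

/-- The Hessian quadratic form `⟪v, ∇²f(θ) v⟫`. -/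
def hessQF (f : EuclideanSpace ℝ (Fin d) → ℝ) (θ v : EuclideanSpace ℝ (Fin d)) : ℝ :=
  ⟪v, fderiv ℝ (gradient f) θ v⟫

set_option maxHeartbeats 1000000 in
/-- **Stability of strongly convex local minimizers.**
If `θ0` is a critical point of `f1`, `f1` is `c0`-strongly convex on `B_ε(θ0)`, and `f2` is
uniformly `δ`-close to `f1` in value and Hessian on `B_ε(θ0)` with `δ < min(c0, c0 ε²/4)`,
then `f2` has a unique critical point in `B_ε(θ0)`, which is a local minimizer of `f2`. -/
theorem statement5 (θ0 : EuclideanSpace ℝ (Fin d)) (ε : ℝ) (hε : 0 < ε)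
    (f1 f2 : EuclideanSpace ℝ (Fin d) → ℝ)
    (hf1 : ContDiffOn ℝ 2 f1 (Metric.ball θ0 ε))
    (hf2 : ContDiffOn ℝ 2 f2 (Metric.ball θ0 ε))
    (c0 δ : ℝ) (hc0 : 0 < c0)
    (hcrit : gradient f1 θ0 = 0)
    (hconv : ∀ θ ∈ Metric.ball θ0 ε, ∀ v, c0 * ‖v‖ ^ 2 ≤ hessQF f1 θ v)
    (hδ : δ < min c0 (c0 * ε ^ 2 / 4))
    (hval : ∀ θ ∈ Metric.ball θ0 ε, |f1 θ - f2 θ| ≤ δ)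
    (hhess : ∀ θ ∈ Metric.ball θ0 ε,
      ‖fderiv ℝ (gradient f1) θ - fderiv ℝ (gradient f2) θ‖ ≤ δ) :
    ∃ θ1 ∈ Metric.ball θ0 ε, gradient f2 θ1 = 0 ∧
      (∀ θ ∈ Metric.ball θ0 ε, gradient f2 θ = 0 → θ = θ1) ∧
      IsLocalMin f2 θ1 := by
  set B := Metric.ball θ0 ε with hB
  have hδc0 : δ < c0 := lt_of_lt_of_le hδ (min_le_left _ _)
  have hδε : δ < c0 * ε ^ 2 / 4 := lt_of_lt_of_le hδ (min_le_right _ _)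
  have hδ0 : 0 ≤ δ := le_trans (abs_nonneg _) (hval θ0 (Metric.mem_ball_self hε))
  have hBopen : IsOpen B := Metric.isOpen_ball
  have hBconv : Convex ℝ B := convex_ball θ0 ε
  have hconv1 : ∀ θ ∈ B, ∀ v, c0 * ‖v‖ ^ 2 ≤ ⟪v, fderiv ℝ (gradient f1) θ v⟫ :=
    fun θ hθ v => hconv θ hθ v
  -- Hessian lower bound for f2
  have hconv2 : ∀ θ ∈ B, ∀ v, (c0 - δ) * ‖v‖ ^ 2 ≤ ⟪v, fderiv ℝ (gradient f2) θ v⟫ := by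
    intro θ hθ v
    have h1 := hconv1 θ hθ v
    have h2 := hhess θ hθ
    set A := fderiv ℝ (gradient f1) θ - fderiv ℝ (gradient f2) θ with hA
    have h3 : |⟪v, A v⟫| ≤ δ * ‖v‖ ^ 2 := by
      calc |⟪v, A v⟫| ≤ ‖v‖ * ‖A v‖ := abs_real_inner_le_norm _ _
        _ ≤ ‖v‖ * (‖A‖ * ‖v‖) := by
            gcongr
            exact A.le_opNorm v
        _ ≤ ‖v‖ * (δ * ‖v‖) := by
            gcongr
        _ = δ * ‖v‖ ^ 2 := by ring
    have h4 : ⟪v, A v⟫ = ⟪v, fderiv ℝ (gradient f1) θ v⟫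
        - ⟪v, fderiv ℝ (gradient f2) θ v⟫ := by
      rw [hA, ContinuousLinearMap.sub_apply, inner_sub_right]
    have h5 := (abs_le.mp h3).2
    linarith
  -- choose an intermediate radius
  set r := Real.sqrt ((4 * δ / c0 + ε ^ 2) / 2) with hr
  have hrarg : 0 < (4 * δ / c0 + ε ^ 2) / 2 := by positivity
  have hr2 : r ^ 2 = (4 * δ / c0 + ε ^ 2) / 2 := Real.sq_sqrt hrarg.le
  have h4δ : 4 * δ / c0 < ε ^ 2 := by
    rw [div_lt_iff₀ hc0]
    nlinarith
  have hr0 : 0 < r := Real.sqrt_pos.mpr hrarg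
  have hrlt : r < ε := by
    have h1 : r ^ 2 < ε ^ 2 := by rw [hr2]; linarith
    nlinarith
  have hr2gt : 4 * δ / c0 < r ^ 2 := by rw [hr2]; linarith
  have hKsub : Metric.closedBall θ0 r ⊆ B := Metric.closedBall_subset_ball hrlt
  obtain ⟨θ1, hθ1K, hθ1min⟩ := (isCompact_closedBall θ0 r).exists_isMinOn
    ⟨θ0, Metric.mem_closedBall_self hr0.le⟩ (hf2.continuousOn.mono hKsub)
  have hmin : ∀ θ ∈ Metric.closedBall θ0 r, f2 θ1 ≤ f2 θ := fun θ hθ => hθ1min hθ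
  have hθ1B : θ1 ∈ B := hKsub hθ1K
  -- θ1 is in the open ball of radius r
  have hθ1lt : dist θ1 θ0 < r := by
    by_contra hcon
    push_neg at hcon
    have heq : dist θ1 θ0 = r := le_antisymm (Metric.mem_closedBall.mp hθ1K) hcon
    have hA := taylor_lb f1 B hBopen hBconv hf1 c0 hconv1 θ0 θ1
      (Metric.mem_ball_self hε) hθ1B
    rw [hcrit, inner_zero_left] at hA
    have hn : ‖θ1 - θ0‖ = r := by rw [← dist_eq_norm]; exact heq
    have hv1 := (abs_le.mp (hval θ1 hθ1B)).2
    have hv0 := (abs_le.mp (hval θ0 (Metric.mem_ball_self hε))).1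
    have hle := hmin θ0 (Metric.mem_closedBall_self hr0.le)
    rw [hn] at hA
    have hcr : c0 * r ^ 2 ≤ 4 * δ := by linarith
    have : r ^ 2 ≤ 4 * δ / c0 := by rw [le_div_iff₀ hc0]; linarith
    linarith
  -- local minimum
  have hlocmin : IsLocalMin f2 θ1 := by
    apply hθ1min.isLocalMin
    exact Metric.closedBall_mem_nhds_of_mem hθ1lt
  have hgrad0 : gradient f2 θ1 = 0 := by
    rw [gradient, hlocmin.fderiv_eq_zero, map_zero]
  refine ⟨θ1, hθ1B, hgrad0, ?_, hlocmin⟩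
  intro θ hθ hgθ
  have hA1 := taylor_lb f2 B hBopen hBconv hf2 (c0 - δ) hconv2 θ1 θ hθ1B hθ
  have hA2 := taylor_lb f2 B hBopen hBconv hf2 (c0 - δ) hconv2 θ θ1 hθ hθ1B
  rw [hgrad0, inner_zero_left] at hA1
  rw [hgθ, inner_zero_left] at hA2
  have hnn : ‖θ1 - θ‖ = ‖θ - θ1‖ := norm_sub_rev _ _
  have hz : ‖θ - θ1‖ ^ 2 ≤ 0 := by nlinarith
  have hz0 : ‖θ - θ1‖ = 0 := le_antisymm (by nlinarith) (norm_nonneg _)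
  exact norm_sub_eq_zero_iff.mp hz0
end
end

section
/- Eigenvalue structure of matrices with a graded block structure: Suppose the family H(σ) ∈ ℝ^{d×d} of symmetric matrices has a graded block structure with respect to the partition into blocks of sizes d_1, …, d_L. Then there exist constants C', c', σ0' > 0 such that for all σ > σ0': (a) H(σ) has exactly d_ℓ eigenvalues (counted with multiplicity) in [c' σ^{−2ℓ}, C' σ^{−2ℓ}] for each ℓ = 1, …, L, and in particular λ_min(H(σ)) ≥ c' σ^{−2L}; (b) for each ℓ with d_1 + … + d_ℓ > 0, the upper-left submatrix H_{:ℓ,:ℓ} (consisting of the first ℓ × ℓ blocks) satisfies λ_min(H_{:ℓ,:ℓ}) ≥ c' σ^{−2ℓ}; and (c) for each such ℓ, the corresponding upper-left submatrix (H^{−1})_{:ℓ,:ℓ} of the inverse satisfies λ_max((H^{−1})_{:ℓ,:ℓ}) ≤ C' σ^{2ℓ}. -/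
open Matrix
open scoped BigOperators

noncomputable section

/-- The bilinear form of the `(k, ℓ)` block of a block matrix indexed by
`Σ ℓ : Fin L, Fin (D ℓ)`. -/
def blockQF {L : ℕ} {D : Fin L → ℕ}
    (H : Matrix ((ℓ : Fin L) × Fin (D ℓ)) ((ℓ : Fin L) × Fin (D ℓ)) ℝ)
    (k ℓ : Fin L) (u : Fin (D k) → ℝ) (v : Fin (D ℓ) → ℝ) : ℝ :=
  ∑ a, ∑ b, u a * H ⟨k, a⟩ ⟨ℓ, b⟩ * v b

/-- A `σ`-indexed family of symmetric block matrices has a **graded block structure** with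
respect to the partition into blocks of sizes `D 0, …, D (L−1)` if, for some `C, c, σ0 > 0`
and all `σ > σ0`, the `ℓ`-th (1-based) diagonal block has all its eigenvalues in
`[c σ^{−2ℓ}, C σ^{−2ℓ}]` and the `(k, ℓ)` off-diagonal block has operator norm at most
`C σ^{−2 max(k,ℓ)}`. -/
def GradedBlockStructure {L : ℕ} (D : Fin L → ℕ)
    (H : ℝ → Matrix ((ℓ : Fin L) × Fin (D ℓ)) ((ℓ : Fin L) × Fin (D ℓ)) ℝ) : Prop :=
  ∃ C > (0:ℝ), ∃ c > (0:ℝ), ∃ σ0 > (0:ℝ), ∀ σ : ℝ, σ0 < σ →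
    ∀ k ℓ : Fin L, 0 < D k → 0 < D ℓ →
      (∀ v : Fin (D ℓ) → ℝ,
        c * (σ ^ (2 * ((ℓ : ℕ) + 1)))⁻¹ * (v ⬝ᵥ v) ≤ blockQF (H σ) ℓ ℓ v v ∧
        blockQF (H σ) ℓ ℓ v v ≤ C * (σ ^ (2 * ((ℓ : ℕ) + 1)))⁻¹ * (v ⬝ᵥ v)) ∧
      (∀ (u : Fin (D k) → ℝ) (v : Fin (D ℓ) → ℝ),
        |blockQF (H σ) k ℓ u v| ≤
          C * (σ ^ (2 * max ((k : ℕ) + 1) ((ℓ : ℕ) + 1)))⁻¹ *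
            Real.sqrt (u ⬝ᵥ u) * Real.sqrt (v ⬝ᵥ v))

/-! ### Auxiliary lemmas -/

section Aux

open Finset

variable {I : Type*} [Fintype I] [DecidableEq I]

/-- quadratic form in eigen-coordinates -/
private lemma eig_expand' (A : Matrix I I ℝ) (hA : A.IsHermitian) (z : I → ℝ) :
    (z ⬝ᵥ A.mulVec z = ∑ j, hA.eigenvalues j * ((hA.eigenvectorBasis j : I → ℝ) ⬝ᵥ z)^2)
    ∧ (z ⬝ᵥ z = ∑ j, ((hA.eigenvectorBasis j : I → ℝ) ⬝ᵥ z)^2) := by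
  set U : Matrix I I ℝ := (hA.eigenvectorUnitary : Matrix I I ℝ) with hU
  set w : I → ℝ := fun j => (hA.eigenvectorBasis j : I → ℝ) ⬝ᵥ z with hwdef
  have hw : star U *ᵥ z = w := by
    funext j
    simp [mulVec, dotProduct, hU, Matrix.star_apply, hwdef]
  have hw2 : z ᵥ* U = w := by
    funext j
    simp [vecMul, dotProduct, hU, hwdef, mul_comm]
  have hUU : U * star U = 1 := Matrix.mem_unitaryGroup_iff.mp hA.eigenvectorUnitary.2
  constructor
  · conv_lhs => rw [hA.spectral_theorem]
    rw [Unitary.conjStarAlgAut_apply]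
    rw [← Matrix.mulVec_mulVec, ← Matrix.mulVec_mulVec, hw, Matrix.dotProduct_mulVec, hw2]
    simp only [dotProduct, mulVec_diagonal, Function.comp, RCLike.ofReal_real_eq_id, id_eq]
    refine Finset.sum_congr rfl fun j _ => ?_
    simp only [hwdef, dotProduct]
    ring
  · have h1 : z ⬝ᵥ z = z ⬝ᵥ ((U * star U) *ᵥ z) := by rw [hUU]; simp
    rw [h1, ← Matrix.mulVec_mulVec, Matrix.dotProduct_mulVec, hw2, hw]
    exact Finset.sum_congr rfl fun j _ => by rw [sq]

open Module Submodule in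
/-- Courant–Fischer, lower direction. -/
private lemma cf_ge' (A : Matrix I I ℝ) (hA : A.IsHermitian) (t : ℝ) (s : Finset I)
    (hQ : ∀ z : I → ℝ, (∀ i, i ∉ s → z i = 0) → t * (z ⬝ᵥ z) ≤ z ⬝ᵥ A.mulVec z) :
    s.card ≤ (Finset.univ.filter fun i => t ≤ hA.eigenvalues i).card := by
  by_contra hcon
  push_neg at hcon
  classical
  set E := EuclideanSpace ℝ I
  let b : s → E := fun i => EuclideanSpace.single (i : I) (1:ℝ)
  have hbon : Orthonormal ℝ b :=
    (EuclideanSpace.orthonormal_single (𝕜 := ℝ) (ι := I)).comp _ Subtype.val_injective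
  set W : Submodule ℝ E := Submodule.span ℝ (Set.range b) with hWdef
  have hWrank : finrank ℝ W = s.card := by
    rw [finrank_span_eq_card hbon.linearIndependent, Fintype.card_coe]
  let sm := {i : I // ¬ t ≤ hA.eigenvalues i}
  let ee : sm → E := fun i => hA.eigenvectorBasis i
  have heon : Orthonormal ℝ ee :=
    hA.eigenvectorBasis.orthonormal.comp _ Subtype.val_injective
  set V : Submodule ℝ E := Submodule.span ℝ (Set.range ee) with hVdef
  have hVrank : finrank ℝ V = (Finset.univ.filter fun i => ¬ t ≤ hA.eigenvalues i).card := by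
    rw [finrank_span_eq_card heon.linearIndependent, Fintype.card_subtype]
  have hcards : (Finset.univ.filter fun i => t ≤ hA.eigenvalues i).card
      + (Finset.univ.filter fun i => ¬ t ≤ hA.eigenvalues i).card = Fintype.card I :=
    Finset.card_filter_add_card_filter_not _
  have hE : finrank ℝ E = Fintype.card I := finrank_euclideanSpace
  have hsup : finrank ℝ ↥(W ⊔ V) ≤ Fintype.card I := hE ▸ (Submodule.finrank_le _)
  have heq := Submodule.finrank_sup_add_finrank_inf_eq W V
  have hpos : 0 < finrank ℝ ↥(W ⊓ V) := by omega
  obtain ⟨⟨z, hzmem⟩, hzne⟩ := Module.finrank_pos_iff_exists_ne_zero.mp hpos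
  have hz0 : z ≠ 0 := fun h => hzne (Subtype.ext h)
  have hzW : z ∈ W := hzmem.1
  have hzV : z ∈ V := hzmem.2
  have hsupp : ∀ i, i ∉ s → (z : I → ℝ) i = 0 := by
    intro i hi
    refine Submodule.span_induction (p := fun (x : E) _ => (x : I → ℝ) i = 0) ?_ rfl ?_ ?_ hzW
    · rintro x ⟨j, rfl⟩
      show (EuclideanSpace.single (j : I) (1:ℝ)) i = 0
      rw [EuclideanSpace.single_apply]
      exact if_neg (fun h => hi (by rw [h]; exact j.2))
    · intro x y _ _ hx hy
      show (x : I → ℝ) i + (y : I → ℝ) i = 0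
      rw [hx, hy, add_zero]
    · intro a x _ hx
      show a * (x : I → ℝ) i = 0
      rw [hx, mul_zero]
  have horth : ∀ j, t ≤ hA.eigenvalues j → ((hA.eigenvectorBasis j : I → ℝ) ⬝ᵥ z) = 0 := by
    intro j hj
    refine Submodule.span_induction
      (p := fun (x : E) _ => ((hA.eigenvectorBasis j : I → ℝ) ⬝ᵥ (x : I → ℝ)) = 0) ?_ ?_ ?_ ?_ hzV
    · rintro x ⟨i, rfl⟩
      have hne : (i : I) ≠ j := fun h => i.2 (h ▸ hj)
      have h0 := hA.eigenvectorBasis.orthonormal.2 (fun h => hne h.symm : j ≠ (i : I))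
      simpa [dotProduct, PiLp.inner_apply, ee, mul_comm] using h0
    · exact dotProduct_zero _
    · intro x y _ _ hx hy
      show ((hA.eigenvectorBasis j : I → ℝ) ⬝ᵥ ((x : I → ℝ) + (y : I → ℝ))) = 0
      rw [dotProduct_add, hx, hy, add_zero]
    · intro a x _ hx
      show ((hA.eigenvectorBasis j : I → ℝ) ⬝ᵥ (a • (x : I → ℝ))) = 0
      rw [dotProduct_smul, hx, smul_zero]
  obtain ⟨hQz, hzz⟩ := eig_expand' A hA z
  set w : I → ℝ := fun j => (hA.eigenvectorBasis j : I → ℝ) ⬝ᵥ z with hwdef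
  have hwne : ∃ j, w j ≠ 0 := by
    by_contra hall
    push_neg at hall
    apply hz0
    have : (z : I → ℝ) ⬝ᵥ z = 0 := by
      rw [hzz]
      exact Finset.sum_eq_zero fun j _ => by
        rw [show (hA.eigenvectorBasis j : I → ℝ) ⬝ᵥ z = w j from rfl, hall j]; ring
    have h2 := dotProduct_self_eq_zero.mp this
    exact WithLp.ofLp_injective 2 h2
  obtain ⟨j0, hj0⟩ := hwne
  have hj0small : hA.eigenvalues j0 < t := by
    by_contra h
    push_neg at h
    exact hj0 (horth j0 h)
  have hstrict : ∑ j, hA.eigenvalues j * (w j)^2 < t * ∑ j, (w j)^2 := by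
    rw [Finset.mul_sum]
    refine Finset.sum_lt_sum (fun j _ => ?_) ⟨j0, Finset.mem_univ j0, ?_⟩
    · by_cases hj : t ≤ hA.eigenvalues j
      · have hwj : w j = 0 := horth j hj
        rw [hwj]; simp
      · push_neg at hj
        nlinarith [sq_nonneg (w j)]
    · have : 0 < (w j0)^2 := by positivity
      nlinarith
  have hQz' := hQ z hsupp
  rw [hQz, hzz] at hQz'
  simp only [← hwdef] at hQz' hstrict
  linarith

open Module Submodule in
/-- Courant–Fischer, upper direction. -/
private lemma cf_le' (A : Matrix I I ℝ) (hA : A.IsHermitian) (t : ℝ) (s : Finset I)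
    (hQ : ∀ z : I → ℝ, (∀ i, i ∉ s → z i = 0) → z ⬝ᵥ A.mulVec z ≤ t * (z ⬝ᵥ z)) :
    s.card ≤ (Finset.univ.filter fun i => hA.eigenvalues i ≤ t).card := by
  by_contra hcon
  push_neg at hcon
  classical
  set E := EuclideanSpace ℝ I
  let b : s → E := fun i => EuclideanSpace.single (i : I) (1:ℝ)
  have hbon : Orthonormal ℝ b :=
    (EuclideanSpace.orthonormal_single (𝕜 := ℝ) (ι := I)).comp _ Subtype.val_injective
  set W : Submodule ℝ E := Submodule.span ℝ (Set.range b) with hWdef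
  have hWrank : finrank ℝ W = s.card := by
    rw [finrank_span_eq_card hbon.linearIndependent, Fintype.card_coe]
  let sm := {i : I // ¬ hA.eigenvalues i ≤ t}
  let ee : sm → E := fun i => hA.eigenvectorBasis i
  have heon : Orthonormal ℝ ee :=
    hA.eigenvectorBasis.orthonormal.comp _ Subtype.val_injective
  set V : Submodule ℝ E := Submodule.span ℝ (Set.range ee) with hVdef
  have hVrank : finrank ℝ V = (Finset.univ.filter fun i => ¬ hA.eigenvalues i ≤ t).card := by
    rw [finrank_span_eq_card heon.linearIndependent, Fintype.card_subtype]
  have hcards : (Finset.univ.filter fun i => hA.eigenvalues i ≤ t).card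
      + (Finset.univ.filter fun i => ¬ hA.eigenvalues i ≤ t).card = Fintype.card I :=
    Finset.card_filter_add_card_filter_not _
  have hE : finrank ℝ E = Fintype.card I := finrank_euclideanSpace
  have hsup : finrank ℝ ↥(W ⊔ V) ≤ Fintype.card I := hE ▸ (Submodule.finrank_le _)
  have heq := Submodule.finrank_sup_add_finrank_inf_eq W V
  have hpos : 0 < finrank ℝ ↥(W ⊓ V) := by omega
  obtain ⟨⟨z, hzmem⟩, hzne⟩ := Module.finrank_pos_iff_exists_ne_zero.mp hpos
  have hz0 : z ≠ 0 := fun h => hzne (Subtype.ext h)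
  have hzW : z ∈ W := hzmem.1
  have hzV : z ∈ V := hzmem.2
  have hsupp : ∀ i, i ∉ s → (z : I → ℝ) i = 0 := by
    intro i hi
    refine Submodule.span_induction (p := fun (x : E) _ => (x : I → ℝ) i = 0) ?_ rfl ?_ ?_ hzW
    · rintro x ⟨j, rfl⟩
      show (EuclideanSpace.single (j : I) (1:ℝ)) i = 0
      rw [EuclideanSpace.single_apply]
      exact if_neg (fun h => hi (by rw [h]; exact j.2))
    · intro x y _ _ hx hy
      show (x : I → ℝ) i + (y : I → ℝ) i = 0
      rw [hx, hy, add_zero]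
    · intro a x _ hx
      show a * (x : I → ℝ) i = 0
      rw [hx, mul_zero]
  have horth : ∀ j, hA.eigenvalues j ≤ t → ((hA.eigenvectorBasis j : I → ℝ) ⬝ᵥ z) = 0 := by
    intro j hj
    refine Submodule.span_induction
      (p := fun (x : E) _ => ((hA.eigenvectorBasis j : I → ℝ) ⬝ᵥ (x : I → ℝ)) = 0) ?_ ?_ ?_ ?_ hzV
    · rintro x ⟨i, rfl⟩
      have hne : (i : I) ≠ j := fun h => i.2 (h ▸ hj)
      have h0 := hA.eigenvectorBasis.orthonormal.2 (fun h => hne h.symm : j ≠ (i : I))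
      simpa [dotProduct, PiLp.inner_apply, ee, mul_comm] using h0
    · exact dotProduct_zero _
    · intro x y _ _ hx hy
      show ((hA.eigenvectorBasis j : I → ℝ) ⬝ᵥ ((x : I → ℝ) + (y : I → ℝ))) = 0
      rw [dotProduct_add, hx, hy, add_zero]
    · intro a x _ hx
      show ((hA.eigenvectorBasis j : I → ℝ) ⬝ᵥ (a • (x : I → ℝ))) = 0
      rw [dotProduct_smul, hx, smul_zero]
  obtain ⟨hQz, hzz⟩ := eig_expand' A hA z
  set w : I → ℝ := fun j => (hA.eigenvectorBasis j : I → ℝ) ⬝ᵥ z with hwdef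
  have hwne : ∃ j, w j ≠ 0 := by
    by_contra hall
    push_neg at hall
    apply hz0
    have : (z : I → ℝ) ⬝ᵥ z = 0 := by
      rw [hzz]
      exact Finset.sum_eq_zero fun j _ => by
        rw [show (hA.eigenvectorBasis j : I → ℝ) ⬝ᵥ z = w j from rfl, hall j]; ring
    have h2 := dotProduct_self_eq_zero.mp this
    exact WithLp.ofLp_injective 2 h2
  obtain ⟨j0, hj0⟩ := hwne
  have hj0small : t < hA.eigenvalues j0 := by
    by_contra h
    push_neg at h
    exact hj0 (horth j0 h)
  have hstrict : t * ∑ j, (w j)^2 < ∑ j, hA.eigenvalues j * (w j)^2 := by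
    rw [Finset.mul_sum]
    refine Finset.sum_lt_sum (fun j _ => ?_) ⟨j0, Finset.mem_univ j0, ?_⟩
    · by_cases hj : hA.eigenvalues j ≤ t
      · have hwj : w j = 0 := horth j hj
        rw [hwj]; simp
      · push_neg at hj
        nlinarith [sq_nonneg (w j)]
    · have : 0 < (w j0)^2 := by positivity
      nlinarith
  have hQz' := hQ z hsupp
  rw [hQz, hzz] at hQz'
  simp only [← hwdef] at hQz' hstrict
  linarith

private lemma inv_pow_mono' {σ : ℝ} (hσ : 1 < σ) {m n : ℕ} (h : m ≤ n) : (σ^n)⁻¹ ≤ (σ^m)⁻¹ :=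
  inv_anti₀ (pow_pos (by linarith) m) (pow_le_pow_right₀ (le_of_lt hσ) h)

private lemma pair_bound' {σ : ℝ} (hσ : 1 < σ) {p q : ℕ} (hpq : p < q) (a b : ℝ) :
    (σ ^ (2*q))⁻¹ * a * b ≤ 1/2 * σ⁻¹ * ((σ ^ (2*p))⁻¹ * a^2 + (σ ^ (2*q))⁻¹ * b^2) := by
  have hσ0 : (0:ℝ) < σ := by linarith
  set s : ℝ := σ ^ (q - p) with hs
  have hs0 : 0 < s := pow_pos hσ0 _
  have h2ab : 2*(a*b) ≤ s*a^2 + s⁻¹*b^2 := by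
    have hss : s⁻¹ * s = 1 := inv_mul_cancel₀ hs0.ne'
    have key : (2*(a*b))*s ≤ (s*a^2 + s⁻¹*b^2)*s := by nlinarith [sq_nonneg (s*a - b)]
    exact le_of_mul_le_mul_right key hs0
  have e1 : (σ ^ (2*q))⁻¹ * s = (σ ^ (q+p))⁻¹ := by
    rw [hs, show 2*q = (q-p) + (q+p) by omega, pow_add, mul_inv, mul_comm ((σ^(q-p))⁻¹) _,
      mul_assoc, inv_mul_cancel₀ (pow_pos hσ0 (q-p)).ne', mul_one]
  have e2 : (σ ^ (2*q))⁻¹ * s⁻¹ = (σ ^ (2*q + (q-p)))⁻¹ := by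
    rw [hs, ← mul_inv, ← pow_add]
  have c1 : (σ ^ (2*q))⁻¹ * s ≤ σ⁻¹ * (σ ^ (2*p))⁻¹ := by
    rw [e1, show σ⁻¹ * (σ ^ (2*p))⁻¹ = (σ ^ (2*p+1))⁻¹ by rw [pow_succ, mul_inv, mul_comm]]
    exact inv_pow_mono' hσ (by omega)
  have c2 : (σ ^ (2*q))⁻¹ * s⁻¹ ≤ σ⁻¹ * (σ ^ (2*q))⁻¹ := by
    rw [e2, show σ⁻¹ * (σ ^ (2*q))⁻¹ = (σ ^ (2*q+1)) ⁻¹ by rw [pow_succ, mul_inv, mul_comm]]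
    exact inv_pow_mono' hσ (by omega)
  have hinv : (0:ℝ) ≤ (σ ^ (2*q))⁻¹ := by positivity
  calc (σ ^ (2*q))⁻¹ * a * b = 1/2 * ((σ ^ (2*q))⁻¹ * (2*(a*b))) := by ring
    _ ≤ 1/2 * ((σ ^ (2*q))⁻¹ * (s*a^2 + s⁻¹*b^2)) := by
        have := mul_le_mul_of_nonneg_left h2ab hinv
        linarith
    _ = 1/2 * (((σ ^ (2*q))⁻¹ * s) * a^2 + ((σ ^ (2*q))⁻¹ * s⁻¹) * b^2) := by ring
    _ ≤ 1/2 * ((σ⁻¹ * (σ ^ (2*p))⁻¹) * a^2 + (σ⁻¹ * (σ ^ (2*q))⁻¹) * b^2) := by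
        have ha2 : (0:ℝ) ≤ a^2 := sq_nonneg a
        have hb2 : (0:ℝ) ≤ b^2 := sq_nonneg b
        nlinarith [mul_le_mul_of_nonneg_right c1 ha2, mul_le_mul_of_nonneg_right c2 hb2]
    _ = 1/2 * σ⁻¹ * ((σ ^ (2*p))⁻¹ * a^2 + (σ ^ (2*q))⁻¹ * b^2) := by ring

private lemma sum_ext_subtype {α : Type*} [Fintype α] (p : α → Prop) [DecidablePred p]
    (g : α → ℝ) (hg : ∀ i, ¬ p i → g i = 0) :
    (∑ i : α, g i) = ∑ i : {x // p x}, g (i : α) := by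
  classical
  rw [← Finset.sum_filter_add_sum_filter_not Finset.univ p g]
  have h2 : (∑ i ∈ Finset.univ.filter (fun i => ¬ p i), g i) = 0 :=
    Finset.sum_eq_zero fun i hi => hg i (Finset.mem_filter.mp hi).2
  rw [h2, add_zero]
  exact Finset.sum_subtype _ (by simp) g


open Finset in
private lemma master' {L : ℕ} {D : Fin L → ℕ}
    (M : Matrix ((ℓ : Fin L) × Fin (D ℓ)) ((ℓ : Fin L) × Fin (D ℓ)) ℝ)
    {C c σ : ℝ} (hC : 0 < C) (hc : 0 < c) (hσ : 1 < σ)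
    (hsmall : C * L * σ⁻¹ ≤ c / 2)
    (hblock : ∀ k ℓ : Fin L, 0 < D k → 0 < D ℓ →
      (∀ v : Fin (D ℓ) → ℝ,
        c * (σ ^ (2 * ((ℓ : ℕ) + 1)))⁻¹ * (v ⬝ᵥ v) ≤ blockQF M ℓ ℓ v v ∧
        blockQF M ℓ ℓ v v ≤ C * (σ ^ (2 * ((ℓ : ℕ) + 1)))⁻¹ * (v ⬝ᵥ v)) ∧
      (∀ (u : Fin (D k) → ℝ) (v : Fin (D ℓ) → ℝ),
        |blockQF M k ℓ u v| ≤
          C * (σ ^ (2 * max ((k : ℕ) + 1) ((ℓ : ℕ) + 1)))⁻¹ *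
            Real.sqrt (u ⬝ᵥ u) * Real.sqrt (v ⬝ᵥ v)))
    (v : ((ℓ : Fin L) × Fin (D ℓ)) → ℝ) :
    c / 2 * (∑ i, (σ ^ (2 * ((i.1 : ℕ) + 1)))⁻¹ * v i ^ 2) ≤ (∑ a, ∑ b, v a * M a b * v b)
    ∧ (∑ a, ∑ b, v a * M a b * v b) ≤ (C + c) * (∑ i, (σ ^ (2 * ((i.1 : ℕ) + 1)))⁻¹ * v i ^ 2) := by
  have hσ0 : (0:ℝ) < σ := by linarith
  set β : Fin L → ℝ := fun k => (σ ^ (2 * ((k : ℕ) + 1)))⁻¹ with hβ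
  have hβpos : ∀ k, 0 < β k := fun k => by positivity
  set vk : (k : Fin L) → Fin (D k) → ℝ := fun k a => v ⟨k, a⟩ with hvk
  set wsq : Fin L → ℝ := fun k => ∑ a, (vk k a)^2 with hwsq
  have hwnn : ∀ k, 0 ≤ wsq k := fun k => Finset.sum_nonneg fun a _ => sq_nonneg _
  have hdot : ∀ k, (vk k ⬝ᵥ vk k) = wsq k := fun k => by
    simp [dotProduct, hwsq, sq]
  set S : ℝ := ∑ k, β k * wsq k with hS
  have hSnn : 0 ≤ S := Finset.sum_nonneg fun k _ => mul_nonneg (hβpos k).le (hwnn k)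
  have hSigma : (∑ i : ((ℓ : Fin L) × Fin (D ℓ)), (σ ^ (2 * ((i.1 : ℕ) + 1)))⁻¹ * v i ^ 2) = S := by
    rw [← Finset.univ_sigma_univ, Finset.sum_sigma, hS]
    exact Finset.sum_congr rfl fun k _ => by rw [Finset.mul_sum]
  set T : Fin L → Fin L → ℝ := fun k l => blockQF M k l (vk k) (vk l) with hT
  have hsplit : (∑ a, ∑ b, v a * M a b * v b) = ∑ k, ∑ l, T k l := by
    rw [← Finset.univ_sigma_univ, Finset.sum_sigma]
    refine Finset.sum_congr rfl fun k _ => ?_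
    calc (∑ a, ∑ b, v ⟨k,a⟩ * M ⟨k,a⟩ b * v b)
        = ∑ a, ∑ l, ∑ b : Fin (D l), v ⟨k,a⟩ * M ⟨k,a⟩ ⟨l,b⟩ * v ⟨l,b⟩ :=
          Finset.sum_congr rfl fun a _ => by
            rw [← Finset.univ_sigma_univ, Finset.sum_sigma]
      _ = ∑ l, ∑ a, ∑ b : Fin (D l), v ⟨k,a⟩ * M ⟨k,a⟩ ⟨l,b⟩ * v ⟨l,b⟩ := Finset.sum_comm
      _ = ∑ l, T k l := rfl
  have hdiag : ∀ k, c * β k * wsq k ≤ T k k ∧ T k k ≤ C * β k * wsq k := by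
    intro k
    by_cases hk : 0 < D k
    · have h := ((hblock k k hk hk).1 (vk k))
      rw [hdot k] at h
      exact h
    · have h0 : D k = 0 := by omega
      haveI : IsEmpty (Fin (D k)) := by rw [h0]; infer_instance
      have hT0 : T k k = 0 := by
        show blockQF M k k (vk k) (vk k) = 0
        unfold blockQF
        simp
      have hw0 : wsq k = 0 := by
        show (∑ a : Fin (D k), (vk k a)^2) = 0
        simp
      rw [hT0, hw0, mul_zero, mul_zero]
      exact ⟨le_refl 0, le_refl 0⟩
  have hTbound : ∀ k l, |T k l| ≤
      C * (σ ^ (2 * max ((k : ℕ) + 1) ((l : ℕ) + 1)))⁻¹ *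
        Real.sqrt (wsq k) * Real.sqrt (wsq l) := by
    intro k l
    by_cases hk : 0 < D k
    · by_cases hl : 0 < D l
      · have h := (hblock k l hk hl).2 (vk k) (vk l)
        rw [hdot k, hdot l] at h
        exact h
      · have h0 : D l = 0 := by omega
        haveI : IsEmpty (Fin (D l)) := by rw [h0]; infer_instance
        have hT0 : T k l = 0 := by
          show blockQF M k l (vk k) (vk l) = 0
          unfold blockQF
          simp
        rw [hT0, abs_zero]
        positivity
    · have h0 : D k = 0 := by omega
      haveI : IsEmpty (Fin (D k)) := by rw [h0]; infer_instance
      have hT0 : T k l = 0 := by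
        show blockQF M k l (vk k) (vk l) = 0
        unfold blockQF
        simp
      rw [hT0, abs_zero]
      positivity
  have hoff : ∀ k l, k ≠ l → |T k l| ≤ C/2 * σ⁻¹ * (β k * wsq k + β l * wsq l) := by
    intro k l hkl
    have hkl' : (k : ℕ) ≠ (l : ℕ) := fun h => hkl (Fin.ext h)
    have hsq : ∀ m : Fin L, Real.sqrt (wsq m) ^ 2 = wsq m := fun m => Real.sq_sqrt (hwnn m)
    have hsnn : ∀ m : Fin L, 0 ≤ Real.sqrt (wsq m) := fun m => Real.sqrt_nonneg _
    rcases Nat.lt_or_ge (k : ℕ) (l : ℕ) with h | h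
    · have hmax : max ((k : ℕ) + 1) ((l : ℕ) + 1) = (l : ℕ) + 1 := by omega
      have hp := pair_bound' hσ (show (k : ℕ) + 1 < (l : ℕ) + 1 by omega)
        (Real.sqrt (wsq k)) (Real.sqrt (wsq l))
      rw [hsq k, hsq l] at hp
      calc |T k l| ≤ C * (σ ^ (2 * max ((k : ℕ) + 1) ((l : ℕ) + 1)))⁻¹ *
            Real.sqrt (wsq k) * Real.sqrt (wsq l) := hTbound k l
        _ = C * ((σ ^ (2 * ((l : ℕ) + 1)))⁻¹ * Real.sqrt (wsq k) * Real.sqrt (wsq l)) := by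
            rw [hmax]; ring
        _ ≤ C * (1/2 * σ⁻¹ * ((σ ^ (2 * ((k : ℕ) + 1)))⁻¹ * wsq k
              + (σ ^ (2 * ((l : ℕ) + 1)))⁻¹ * wsq l)) := by
            exact mul_le_mul_of_nonneg_left hp hC.le
        _ = C/2 * σ⁻¹ * (β k * wsq k + β l * wsq l) := by rw [hβ]; ring
    · have hlk : (l : ℕ) < (k : ℕ) := by omega
      have hmax : max ((k : ℕ) + 1) ((l : ℕ) + 1) = (k : ℕ) + 1 := by omega
      have hp := pair_bound' hσ (show (l : ℕ) + 1 < (k : ℕ) + 1 by omega)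
        (Real.sqrt (wsq l)) (Real.sqrt (wsq k))
      rw [hsq k, hsq l] at hp
      calc |T k l| ≤ C * (σ ^ (2 * max ((k : ℕ) + 1) ((l : ℕ) + 1)))⁻¹ *
            Real.sqrt (wsq k) * Real.sqrt (wsq l) := hTbound k l
        _ = C * ((σ ^ (2 * ((k : ℕ) + 1)))⁻¹ * Real.sqrt (wsq l) * Real.sqrt (wsq k)) := by
            rw [hmax]; ring
        _ ≤ C * (1/2 * σ⁻¹ * ((σ ^ (2 * ((l : ℕ) + 1)))⁻¹ * wsq l
              + (σ ^ (2 * ((k : ℕ) + 1)))⁻¹ * wsq k)) := by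
            exact mul_le_mul_of_nonneg_left hp hC.le
        _ = C/2 * σ⁻¹ * (β k * wsq k + β l * wsq l) := by rw [hβ]; ring
  -- split into diagonal and off-diagonal parts
  set R : ℝ := ∑ k, ∑ l ∈ Finset.univ.erase k, T k l with hR
  have hdecomp : (∑ k, ∑ l, T k l) = (∑ k, T k k) + R := by
    rw [hR, ← Finset.sum_add_distrib]
    refine Finset.sum_congr rfl fun k _ => ?_
    rw [add_comm, Finset.sum_erase_add _ _ (Finset.mem_univ k)]
  have hRabs : |R| ≤ c/2 * S := by
    have step1 : |R| ≤ ∑ k, ∑ l ∈ Finset.univ.erase k, |T k l| := by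
      refine (Finset.abs_sum_le_sum_abs _ _).trans ?_
      exact Finset.sum_le_sum fun k _ => Finset.abs_sum_le_sum_abs _ _
    have step2 : (∑ k, ∑ l ∈ Finset.univ.erase k, |T k l|)
        ≤ ∑ k, ∑ l ∈ Finset.univ.erase k, C/2 * σ⁻¹ * (β k * wsq k + β l * wsq l) := by
      refine Finset.sum_le_sum fun k _ => Finset.sum_le_sum fun l hl => ?_
      exact hoff k l (fun h => (Finset.mem_erase.mp hl).1 h.symm)
    have step3 : (∑ k, ∑ l ∈ Finset.univ.erase k, C/2 * σ⁻¹ * (β k * wsq k + β l * wsq l))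
        ≤ C/2 * σ⁻¹ * (2 * L * S) := by
      have inner : ∀ k : Fin L, (∑ l ∈ Finset.univ.erase k, (β k * wsq k + β l * wsq l))
          ≤ L * (β k * wsq k) + S := by
        intro k
        rw [Finset.sum_add_distrib, Finset.sum_const, nsmul_eq_mul]
        have h1 : ((Finset.univ.erase k).card : ℝ) ≤ (L : ℝ) := by
          have h := Finset.card_erase_le (a := k) (s := (Finset.univ : Finset (Fin L)))
          have h' : (Finset.univ.erase k).card ≤ L := by simpa using h
          exact_mod_cast h'
        have h2 : (∑ l ∈ Finset.univ.erase k, β l * wsq l) ≤ S := by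
          refine Finset.sum_le_sum_of_subset_of_nonneg (Finset.subset_univ _) ?_
          exact fun l _ _ => mul_nonneg (hβpos l).le (hwnn l)
        have h3 : 0 ≤ β k * wsq k := mul_nonneg (hβpos k).le (hwnn k)
        nlinarith
      calc (∑ k, ∑ l ∈ Finset.univ.erase k, C/2 * σ⁻¹ * (β k * wsq k + β l * wsq l))
          = ∑ k, C/2 * σ⁻¹ * (∑ l ∈ Finset.univ.erase k, (β k * wsq k + β l * wsq l)) := by
            exact Finset.sum_congr rfl fun k _ => (Finset.mul_sum _ _ _).symm
        _ ≤ ∑ k, C/2 * σ⁻¹ * ((L : ℝ) * (β k * wsq k) + S) := by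
            refine Finset.sum_le_sum fun k _ => ?_
            refine mul_le_mul_of_nonneg_left (inner k) ?_
            positivity
        _ = C/2 * σ⁻¹ * ((L : ℝ) * S + L * S) := by
            rw [← Finset.mul_sum, Finset.sum_add_distrib, ← Finset.mul_sum, ← hS,
              Finset.sum_const, Finset.card_univ, Fintype.card_fin, nsmul_eq_mul]
        _ = C/2 * σ⁻¹ * (2 * L * S) := by ring
    have hfin : C/2 * σ⁻¹ * (2 * L * S) ≤ c/2 * S := by
      have : C/2 * σ⁻¹ * (2 * L * S) = (C * L * σ⁻¹) * S := by ring
      rw [this]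
      exact mul_le_mul_of_nonneg_right hsmall hSnn
    linarith
  have hdl : c * S ≤ ∑ k, T k k := by
    rw [hS, Finset.mul_sum]
    refine Finset.sum_le_sum fun k _ => ?_
    have := (hdiag k).1
    linarith
  have hdu : (∑ k, T k k) ≤ C * S := by
    rw [hS, Finset.mul_sum]
    refine Finset.sum_le_sum fun k _ => ?_
    have := (hdiag k).2
    linarith
  have habsR := abs_le.mp hRabs
  constructor
  · rw [hSigma, hsplit, hdecomp]
    linarith
  · rw [hSigma, hsplit, hdecomp]
    nlinarith


end Aux

set_option maxHeartbeats 1000000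

/-- **Eigenvalue structure of matrices with a graded block structure.**
If the symmetric family `H(σ)` has a graded block structure, then for some `C', c', σ0' > 0`
and all `σ > σ0'`: (a) `H(σ)` has exactly `D ℓ` eigenvalues (with multiplicity) in
`[c' σ^{−2ℓ}, C' σ^{−2ℓ}]` for each block `ℓ`, and `λ_min(H(σ)) ≥ c' σ^{−2L}`; (b) for each
`1 ≤ ℓ ≤ L` whose first `ℓ` blocks are not all empty, the upper-left `ℓ × ℓ` block
submatrix satisfies `λ_min ≥ c' σ^{−2ℓ}`; and (c) the corresponding upper-left submatrix of
`H(σ)⁻¹` satisfies `λ_max ≤ C' σ^{2ℓ}`. -/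
theorem statement13 {L : ℕ} (hL : 0 < L) (D : Fin L → ℕ)
    (H : ℝ → Matrix ((ℓ : Fin L) × Fin (D ℓ)) ((ℓ : Fin L) × Fin (D ℓ)) ℝ)
    (hsymm : ∀ σ : ℝ, (H σ).IsHermitian)
    (hgraded : GradedBlockStructure D H) :
    ∃ C' > (0:ℝ), ∃ c' > (0:ℝ), ∃ σ0' > (0:ℝ), ∀ σ : ℝ, σ0' < σ →
      (∀ ℓ : Fin L,
        (Finset.univ.filter fun i : (j : Fin L) × Fin (D j) =>
            (hsymm σ).eigenvalues i ∈
              Set.Icc (c' * (σ ^ (2 * ((ℓ : ℕ) + 1)))⁻¹)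
                (C' * (σ ^ (2 * ((ℓ : ℕ) + 1)))⁻¹)).card = D ℓ) ∧
      (∀ v : ((j : Fin L) × Fin (D j)) → ℝ,
        c' * (σ ^ (2 * L))⁻¹ * (v ⬝ᵥ v) ≤ v ⬝ᵥ (H σ).mulVec v) ∧
      (∀ ℓ : ℕ, 1 ≤ ℓ → ℓ ≤ L → (∃ j : Fin L, (j : ℕ) < ℓ ∧ 0 < D j) →
        (∀ v : {i : (j : Fin L) × Fin (D j) // (i.1 : ℕ) < ℓ} → ℝ,
          c' * (σ ^ (2 * ℓ))⁻¹ * (∑ a, v a * v a) ≤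
            ∑ a, ∑ b, v a * H σ a.1 b.1 * v b) ∧
        (∀ v : {i : (j : Fin L) × Fin (D j) // (i.1 : ℕ) < ℓ} → ℝ,
          ∑ a, ∑ b, v a * (H σ)⁻¹ a.1 b.1 * v b ≤
            C' * σ ^ (2 * ℓ) * ∑ a, v a * v a)) := by
  classical
  obtain ⟨C, hCpos, c, hcpos, σ0, hσ0pos, hblk⟩ := hgraded
  have hC'pos : (0:ℝ) < C + c + 2/c := by positivity
  have hc'pos : (0:ℝ) < c/2 := by positivity
  refine ⟨C + c + 2/c, hC'pos, c/2, hc'pos,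
    σ0 + 1 + 2*C*L/c + (C + c + 2/c)/(c/2), by positivity, ?_⟩
  set C' : ℝ := C + c + 2/c with hC'def
  set c' : ℝ := c/2 with hc'def
  intro σ hσσ1
  have haux1 : (0:ℝ) ≤ 2*C*L/c := by positivity
  have haux2 : (0:ℝ) ≤ C'/c' := by positivity
  have hσgt1 : 1 < σ := by linarith
  have hσpos : (0:ℝ) < σ := by linarith
  have hσ0lt : σ0 < σ := by linarith
  have hsmall : C * L * σ⁻¹ ≤ c / 2 := by
    have hgt : 2*C*L/c < σ := by linarith
    have e : 2*C*(L:ℝ)/c * c = 2*C*L := div_mul_cancel₀ _ hcpos.ne'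
    have key : C * (L:ℝ) ≤ c/2 * σ := by nlinarith [mul_lt_mul_of_pos_right hgt hcpos]
    have einv : σ * σ⁻¹ = 1 := mul_inv_cancel₀ hσpos.ne'
    have hinvnn : (0:ℝ) ≤ σ⁻¹ := inv_nonneg.mpr hσpos.le
    nlinarith [mul_le_mul_of_nonneg_right key hinvnn]
  have hgap : ∀ m : ℕ, C' * (σ ^ (2*(m+1)))⁻¹ < c' * (σ ^ (2*m))⁻¹ := by
    intro m
    have h1 : σ ^ (2*(m+1)) = σ^(2*m) * σ^2 := by ring
    have hpm : (0:ℝ) < σ^(2*m) := pow_pos hσpos _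
    have hs2 : (0:ℝ) < σ^2 := pow_pos hσpos 2
    have hC'c' : C' < c' * σ^2 := by
      have h2 : C'/c' < σ := by linarith
      have h3 : C' < c' * σ := by
        have := mul_lt_mul_of_pos_left h2 hc'pos
        rwa [mul_div_cancel₀ _ hc'pos.ne'] at this
      have h4 : σ < σ^2 := by nlinarith
      nlinarith
    rw [h1, mul_inv]
    have hlt : C' * (σ^2)⁻¹ < c' := by
      have hinv2 : (0:ℝ) < (σ^2)⁻¹ := inv_pos.mpr hs2
      have e2 : σ^2 * (σ^2)⁻¹ = 1 := mul_inv_cancel₀ hs2.ne'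
      nlinarith [mul_lt_mul_of_pos_right hC'c' hinv2]
    calc C' * ((σ^(2*m))⁻¹ * (σ^2)⁻¹) = (C' * (σ^2)⁻¹) * (σ^(2*m))⁻¹ := by ring
      _ < c' * (σ^(2*m))⁻¹ := by
          exact mul_lt_mul_of_pos_right hlt (inv_pos.mpr hpm)
  have hblkσ := hblk σ hσ0lt
  have hmaster := fun v => master' (H σ) hCpos hcpos hσgt1 hsmall hblkσ v
  have hQform : ∀ (N : Matrix ((j : Fin L) × Fin (D j)) ((j : Fin L) × Fin (D j)) ℝ)
      (w : ((j : Fin L) × Fin (D j)) → ℝ),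
      (∑ a, ∑ b, w a * N a b * w b) = w ⬝ᵥ N.mulVec w := by
    intro N w
    simp only [dotProduct, mulVec, Finset.mul_sum]
    exact Finset.sum_congr rfl fun a _ => Finset.sum_congr rfl fun b _ => by ring
  have hdotsum : ∀ w : ((j : Fin L) × Fin (D j)) → ℝ, w ⬝ᵥ w = ∑ i, (w i)^2 := fun w => by
    simp [dotProduct, sq]
  -- key lower estimate
  have key_low : ∀ (m : ℕ) (z : ((j : Fin L) × Fin (D j)) → ℝ),
      (∀ i : ((j : Fin L) × Fin (D j)), ¬((i.1:ℕ) < m) → z i = 0) →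
      c' * (σ^(2*m))⁻¹ * (z ⬝ᵥ z) ≤ z ⬝ᵥ (H σ).mulVec z := by
    intro m z hz
    rw [← hQform (H σ) z]
    have hm := (hmaster z).1
    have hpt : ∀ i : ((j : Fin L) × Fin (D j)),
        c' * (σ^(2*m))⁻¹ * (z i)^2 ≤ c/2 * ((σ^(2*((i.1:ℕ)+1)))⁻¹ * (z i)^2) := by
      intro i
      by_cases hi : (i.1:ℕ) < m
      · have hmono : (σ^(2*m))⁻¹ ≤ (σ^(2*((i.1:ℕ)+1)))⁻¹ := inv_pow_mono' hσgt1 (by omega)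
        have hz2 : (0:ℝ) ≤ (z i)^2 := sq_nonneg _
        rw [hc'def]
        nlinarith [mul_le_mul_of_nonneg_right hmono hz2]
      · rw [hz i hi]
        simp
    calc c' * (σ^(2*m))⁻¹ * (z ⬝ᵥ z) = ∑ i, c' * (σ^(2*m))⁻¹ * (z i)^2 := by
          rw [hdotsum z, Finset.mul_sum]
      _ ≤ ∑ i, c/2 * ((σ^(2*((i.1:ℕ)+1)))⁻¹ * (z i)^2) := Finset.sum_le_sum fun i _ => hpt i
      _ = c/2 * ∑ i, (σ^(2*((i.1:ℕ)+1)))⁻¹ * (z i)^2 := by rw [Finset.mul_sum]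
      _ ≤ _ := hm
  -- key upper estimate
  have key_high : ∀ (ℓ : Fin L) (z : ((j : Fin L) × Fin (D j)) → ℝ),
      (∀ i : ((j : Fin L) × Fin (D j)), (i.1:ℕ) < (ℓ:ℕ) → z i = 0) →
      z ⬝ᵥ (H σ).mulVec z ≤ C' * (σ^(2*((ℓ:ℕ)+1)))⁻¹ * (z ⬝ᵥ z) := by
    intro ℓ z hz
    rw [← hQform (H σ) z]
    have hm := (hmaster z).2
    have hC'ge : C + c ≤ C' := by
      have : (0:ℝ) < 2/c := by positivity
      rw [hC'def]; linarith
    have hpt : ∀ i : ((j : Fin L) × Fin (D j)),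
        (C+c) * ((σ^(2*((i.1:ℕ)+1)))⁻¹ * (z i)^2) ≤ C' * (σ^(2*((ℓ:ℕ)+1)))⁻¹ * (z i)^2 := by
      intro i
      by_cases hi : (i.1:ℕ) < (ℓ:ℕ)
      · rw [hz i hi]
        simp
      · have hmono : (σ^(2*((i.1:ℕ)+1)))⁻¹ ≤ (σ^(2*((ℓ:ℕ)+1)))⁻¹ := inv_pow_mono' hσgt1 (by omega)
        have hz2 : (0:ℝ) ≤ (z i)^2 := sq_nonneg _
        have hCc : (0:ℝ) < C + c := by linarith
        have hb : (0:ℝ) ≤ (σ^(2*((ℓ:ℕ)+1)))⁻¹ := by positivity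
        nlinarith [mul_le_mul_of_nonneg_right hmono hz2,
          mul_le_mul_of_nonneg_right hC'ge (mul_nonneg hb hz2)]
    calc (∑ a, ∑ b, z a * (H σ) a b * z b)
        ≤ (C+c) * ∑ i, (σ^(2*((i.1:ℕ)+1)))⁻¹ * (z i)^2 := hm
      _ = ∑ i, (C+c) * ((σ^(2*((i.1:ℕ)+1)))⁻¹ * (z i)^2) := by rw [Finset.mul_sum]
      _ ≤ ∑ i, C' * (σ^(2*((ℓ:ℕ)+1)))⁻¹ * (z i)^2 := Finset.sum_le_sum fun i _ => hpt i
      _ = C' * (σ^(2*((ℓ:ℕ)+1)))⁻¹ * (z ⬝ᵥ z) := by rw [hdotsum z, Finset.mul_sum]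
  refine ⟨?_, ?_, ?_⟩
  · -- part (a): eigenvalue counts
    intro ℓ
    set lam : ((j : Fin L) × Fin (D j)) → ℝ := (hsymm σ).eigenvalues with hlam
    have hcardfilter : ∀ m : ℕ,
        (Finset.univ.filter fun i : ((j : Fin L) × Fin (D j)) => (i.1:ℕ) < m).card
          = ∑ k : Fin L, if (k:ℕ) < m then D k else 0 := by
      intro m
      rw [Finset.card_filter, ← Finset.univ_sigma_univ, Finset.sum_sigma]
      refine Finset.sum_congr rfl fun k _ => ?_
      by_cases h : (k:ℕ) < m
      · simp [h]
      · simp [h]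
    have hge : ∀ m : ℕ,
        (Finset.univ.filter fun i : ((j : Fin L) × Fin (D j)) => (i.1:ℕ) < m).card
          ≤ (Finset.univ.filter fun i => c' * (σ^(2*m))⁻¹ ≤ lam i).card := by
      intro m
      refine cf_ge' (H σ) (hsymm σ) _ _ ?_
      intro z hz
      refine key_low m z ?_
      intro i hi
      exact hz i (by simp [hi])
    have hle : ∀ ℓ' : Fin L,
        (Finset.univ.filter fun i : ((j : Fin L) × Fin (D j)) => ¬((i.1:ℕ) < (ℓ':ℕ))).card
          ≤ (Finset.univ.filter fun i => lam i ≤ C' * (σ^(2*((ℓ':ℕ)+1)))⁻¹).card := by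
      intro ℓ'
      refine cf_le' (H σ) (hsymm σ) _ _ ?_
      intro z hz
      refine key_high ℓ' z ?_
      intro i hi
      exact hz i (by simpa using hi)
    -- upper bound for the strict-upper-tail count
    have hBneg_ub : ∀ ℓ' : Fin L,
        (Finset.univ.filter fun i => ¬(lam i ≤ C' * (σ^(2*((ℓ':ℕ)+1)))⁻¹)).card
          ≤ (Finset.univ.filter fun i : ((j : Fin L) × Fin (D j)) => (i.1:ℕ) < (ℓ':ℕ)).card := by
      intro ℓ'
      have h1 := hle ℓ'
      have h2 := Finset.card_filter_add_card_filter_not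
        (s := (Finset.univ : Finset ((j : Fin L) × Fin (D j))))
        (p := fun i => lam i ≤ C' * (σ^(2*((ℓ':ℕ)+1)))⁻¹)
      have h3 := Finset.card_filter_add_card_filter_not
        (s := (Finset.univ : Finset ((j : Fin L) × Fin (D j))))
        (p := fun i : ((j : Fin L) × Fin (D j)) => (i.1:ℕ) < (ℓ':ℕ))
      omega
    -- lower bound for the strict-upper-tail count at our ℓ
    have hBneg_lb :
        (Finset.univ.filter fun i : ((j : Fin L) × Fin (D j)) => (i.1:ℕ) < (ℓ:ℕ)).card
          ≤ (Finset.univ.filter fun i => ¬(lam i ≤ C' * (σ^(2*((ℓ:ℕ)+1)))⁻¹)).card := by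
      refine le_trans (hge (ℓ:ℕ)) (Finset.card_le_card ?_)
      refine Finset.monotone_filter_right _ ?_
      intro i hi
      have := hgap (ℓ:ℕ)
      intro hcon
      linarith
    -- upper bound for G
    have hG_ub : (Finset.univ.filter fun i => c' * (σ^(2*((ℓ:ℕ)+1)))⁻¹ ≤ lam i).card
        ≤ (Finset.univ.filter
            fun i : ((j : Fin L) × Fin (D j)) => (i.1:ℕ) < (ℓ:ℕ)+1).card := by
      by_cases hcase : (ℓ:ℕ) + 1 < L
      · set ℓ2 : Fin L := ⟨(ℓ:ℕ)+1, hcase⟩ with hℓ2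
        have hv : (ℓ2:ℕ) = (ℓ:ℕ)+1 := rfl
        have hstep : (Finset.univ.filter fun i => c' * (σ^(2*((ℓ:ℕ)+1)))⁻¹ ≤ lam i).card
            ≤ (Finset.univ.filter fun i => ¬(lam i ≤ C' * (σ^(2*((ℓ2:ℕ)+1)))⁻¹)).card := by
          refine Finset.card_le_card (Finset.monotone_filter_right _ ?_)
          intro i hi
          have := hgap ((ℓ:ℕ)+1)
          rw [hv]
          intro hcon
          linarith
        refine le_trans hstep (le_trans (hBneg_ub ℓ2) ?_)
        rw [hv]
      · have hL2 : ∀ i : ((j : Fin L) × Fin (D j)), (i.1:ℕ) < (ℓ:ℕ)+1 := by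
          intro i
          have := i.1.isLt
          omega
        rw [Finset.filter_true_of_mem (fun i _ => hL2 i)]
        exact Finset.card_le_card (Finset.filter_subset _ _)
    -- lower bound for G
    have hG_lb : (Finset.univ.filter
          fun i : ((j : Fin L) × Fin (D j)) => (i.1:ℕ) < (ℓ:ℕ)+1).card
        ≤ (Finset.univ.filter fun i => c' * (σ^(2*((ℓ:ℕ)+1)))⁻¹ ≤ lam i).card :=
      hge ((ℓ:ℕ)+1)
    -- split of the upper set
    have hab : c' * (σ^(2*((ℓ:ℕ)+1)))⁻¹ ≤ C' * (σ^(2*((ℓ:ℕ)+1)))⁻¹ := by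
      have h1 : c' ≤ C' := by
        rw [hc'def, hC'def]
        have : (0:ℝ) < 2/c := by positivity
        linarith
      have h2 : (0:ℝ) ≤ (σ^(2*((ℓ:ℕ)+1)))⁻¹ := by positivity
      exact mul_le_mul_of_nonneg_right h1 h2
    have hsplit : (Finset.univ.filter fun i => c' * (σ^(2*((ℓ:ℕ)+1)))⁻¹ ≤ lam i).card
        = (Finset.univ.filter fun i : ((j : Fin L) × Fin (D j)) =>
            lam i ∈ Set.Icc (c' * (σ ^ (2 * ((ℓ : ℕ) + 1)))⁻¹)
              (C' * (σ ^ (2 * ((ℓ : ℕ) + 1)))⁻¹)).card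
          + (Finset.univ.filter fun i => ¬(lam i ≤ C' * (σ^(2*((ℓ:ℕ)+1)))⁻¹)).card := by
      rw [← Finset.card_union_of_disjoint ?hd]
      case hd =>
        rw [Finset.disjoint_left]
        intro i hi1 hi2
        rw [Finset.mem_filter] at hi1 hi2
        exact hi2.2 hi1.2.2
      congr 1
      ext i
      simp only [Finset.mem_filter, Finset.mem_union, Finset.mem_univ, true_and, Set.mem_Icc]
      constructor
      · intro h
        by_cases hb : lam i ≤ C' * (σ^(2*((ℓ:ℕ)+1)))⁻¹
        · exact Or.inl ⟨h, hb⟩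
        · exact Or.inr hb
      · rintro (⟨h1, _⟩ | h)
        · exact h1
        · push_neg at h
          linarith
    -- block count identity
    have hsucc : (Finset.univ.filter
          fun i : ((j : Fin L) × Fin (D j)) => (i.1:ℕ) < (ℓ:ℕ)+1).card
        = (Finset.univ.filter
            fun i : ((j : Fin L) × Fin (D j)) => (i.1:ℕ) < (ℓ:ℕ)).card + D ℓ := by
      rw [hcardfilter, hcardfilter]
      have hsplitk : ∀ k : Fin L, (if (k:ℕ) < (ℓ:ℕ)+1 then D k else 0)
          = (if (k:ℕ) < (ℓ:ℕ) then D k else 0) + (if k = ℓ then D k else 0) := by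
        intro k
        rcases Nat.lt_trichotomy (k:ℕ) (ℓ:ℕ) with h|h|h
        · have hne : k ≠ ℓ := fun he => by rw [he] at h; exact absurd h (lt_irrefl _)
          rw [if_pos (by omega), if_pos h, if_neg hne, add_zero]
        · have he : k = ℓ := Fin.ext h
          subst he
          rw [if_pos (by omega), if_neg (by omega), if_pos rfl, zero_add]
        · have hne : k ≠ ℓ := fun he => by rw [he] at h; exact absurd h (lt_irrefl _)
          rw [if_neg (by omega), if_neg (by omega), if_neg hne, add_zero]
      rw [Finset.sum_congr rfl (fun k _ => hsplitk k), Finset.sum_add_distrib]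
      congr 1
      rw [Finset.sum_ite_eq' Finset.univ ℓ (fun k => D k)]
      simp
    have hb1 := hBneg_ub ℓ
    omega
  · -- part (b') : global lower bound
    intro v
    have := key_low L v (fun i hi => absurd i.1.isLt hi)
    exact this
  · -- parts (b), (c)
    intro ℓ hℓ1 hℓ2 _hex
    have hpd : (H σ).PosDef := by
      refine Matrix.posDef_iff_dotProduct_mulVec.mpr ⟨hsymm σ, fun y hy => ?_⟩
      have h1 := key_low L y (fun i hi => absurd i.1.isLt hi)
      have hnn : 0 ≤ y ⬝ᵥ y := by
        rw [hdotsum y]; exact Finset.sum_nonneg fun i _ => sq_nonneg _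
      have hne : y ⬝ᵥ y ≠ 0 := fun h => hy (dotProduct_self_eq_zero.mp h)
      have h2 : 0 < y ⬝ᵥ y := lt_of_le_of_ne hnn (Ne.symm hne)
      have h3 : 0 < c' * (σ^(2*L))⁻¹ * (y ⬝ᵥ y) := by
        refine mul_pos (mul_pos hc'pos ?_) h2
        exact inv_pos.mpr (pow_pos hσpos _)
      have hstar : star y = y := funext fun i => star_trivial _
      rw [hstar]
      linarith
    have hdet : IsUnit (H σ).det := hpd.det_pos.ne'.isUnit
    have hHinv : H σ * (H σ)⁻¹ = 1 := Matrix.mul_nonsing_inv _ hdet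
    constructor
    · -- part (b)
      intro v
      set x : ((j : Fin L) × Fin (D j)) → ℝ :=
        fun i => if h : (i.1:ℕ) < ℓ then v ⟨i, h⟩ else 0 with hx
      have hx0 : ∀ i, ¬ ((i.1:ℕ) < ℓ) → x i = 0 := fun i h => dif_neg h
      have hxv : ∀ i : {i : (j : Fin L) × Fin (D j) // (i.1 : ℕ) < ℓ}, x i.1 = v i := by
        intro i
        rw [hx]
        simp only
        rw [dif_pos i.2]
      have hsum1 : (∑ i, x i * x i) = ∑ a : {i : (j : Fin L) × Fin (D j) // (i.1 : ℕ) < ℓ},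
          v a * v a := by
        rw [sum_ext_subtype (fun i => (i.1:ℕ) < ℓ) _ (fun i h => by rw [hx0 i h, mul_zero])]
        exact Finset.sum_congr rfl fun i _ => by rw [hxv i]
      have hsum2 : (∑ a, ∑ b, x a * (H σ) a b * x b)
          = ∑ a : {i : (j : Fin L) × Fin (D j) // (i.1 : ℕ) < ℓ},
            ∑ b : {i : (j : Fin L) × Fin (D j) // (i.1 : ℕ) < ℓ},
              v a * (H σ) a.1 b.1 * v b := by
        rw [sum_ext_subtype (fun i => (i.1:ℕ) < ℓ) _
          (fun a ha => Finset.sum_eq_zero fun b _ => by rw [hx0 a ha, zero_mul, zero_mul])]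
        refine Finset.sum_congr rfl fun a _ => ?_
        rw [sum_ext_subtype (fun i => (i.1:ℕ) < ℓ) _
          (fun b hb => by rw [hx0 b hb, mul_zero])]
        exact Finset.sum_congr rfl fun b _ => by rw [hxv a, hxv b]
      have hk := key_low ℓ x hx0
      rw [← hQform (H σ) x, show x ⬝ᵥ x = ∑ i, x i * x i from rfl, hsum1, hsum2] at hk
      exact hk
    · -- part (c)
      intro v
      set x : ((j : Fin L) × Fin (D j)) → ℝ :=
        fun i => if h : (i.1:ℕ) < ℓ then v ⟨i, h⟩ else 0 with hx
      have hx0 : ∀ i, ¬ ((i.1:ℕ) < ℓ) → x i = 0 := fun i h => dif_neg h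
      have hxv : ∀ i : {i : (j : Fin L) × Fin (D j) // (i.1 : ℕ) < ℓ}, x i.1 = v i := by
        intro i
        rw [hx]
        simp only
        rw [dif_pos i.2]
      have hsum2 : (∑ a, ∑ b, x a * (H σ)⁻¹ a b * x b)
          = ∑ a : {i : (j : Fin L) × Fin (D j) // (i.1 : ℕ) < ℓ},
            ∑ b : {i : (j : Fin L) × Fin (D j) // (i.1 : ℕ) < ℓ},
              v a * (H σ)⁻¹ a.1 b.1 * v b := by
        rw [sum_ext_subtype (fun i => (i.1:ℕ) < ℓ) _
          (fun a ha => Finset.sum_eq_zero fun b _ => by rw [hx0 a ha, zero_mul, zero_mul])]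
        refine Finset.sum_congr rfl fun a _ => ?_
        rw [sum_ext_subtype (fun i => (i.1:ℕ) < ℓ) _
          (fun b hb => by rw [hx0 b hb, mul_zero])]
        exact Finset.sum_congr rfl fun b _ => by rw [hxv a, hxv b]
      have hXv : (∑ i, (x i)^2) = ∑ a : {i : (j : Fin L) × Fin (D j) // (i.1 : ℕ) < ℓ},
          v a * v a := by
        rw [sum_ext_subtype (fun i => (i.1:ℕ) < ℓ) _ (fun i h => by rw [hx0 i h]; ring)]
        exact Finset.sum_congr rfl fun i _ => by rw [hxv i]; ring
      set u : ((j : Fin L) × Fin (D j)) → ℝ := (H σ)⁻¹ *ᵥ x with hu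
      have hxu : (∑ a, ∑ b, x a * (H σ)⁻¹ a b * x b) = x ⬝ᵥ u := hQform _ x
      have hHu : (H σ) *ᵥ u = x := by
        rw [hu, Matrix.mulVec_mulVec, hHinv, Matrix.one_mulVec]
      have hQu : u ⬝ᵥ (H σ).mulVec u = x ⬝ᵥ u := by
        rw [show (H σ).mulVec u = x from hHu, dotProduct_comm]
      have hm := (hmaster u).1
      rw [hQform (H σ) u, hQu] at hm
      set Uc : ℝ := ∑ i, (if (i.1:ℕ) < ℓ then (u i)^2 else 0) with hUc
      have hUnn : 0 ≤ Uc := Finset.sum_nonneg fun i _ => by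
        by_cases hi : (i.1:ℕ) < ℓ <;> simp [hi, sq_nonneg]
      have hUb : c/2 * ((σ^(2*ℓ))⁻¹ * Uc) ≤ x ⬝ᵥ u := by
        refine le_trans ?_ hm
        have hptw : ∀ i : ((j : Fin L) × Fin (D j)),
            (σ^(2*ℓ))⁻¹ * (if (i.1:ℕ) < ℓ then (u i)^2 else 0)
              ≤ (σ^(2*((i.1:ℕ)+1)))⁻¹ * (u i)^2 := by
          intro i
          by_cases hi : (i.1:ℕ) < ℓ
          · rw [if_pos hi]
            exact mul_le_mul_of_nonneg_right (inv_pow_mono' hσgt1 (by omega)) (sq_nonneg _)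
          · rw [if_neg hi, mul_zero]
            positivity
        have hs1 : (σ^(2*ℓ))⁻¹ * Uc ≤ ∑ i, (σ^(2*((i.1:ℕ)+1)))⁻¹ * (u i)^2 := by
          rw [hUc, Finset.mul_sum]
          exact Finset.sum_le_sum fun i _ => hptw i
        have hc2 : (0:ℝ) ≤ c/2 := by linarith
        exact mul_le_mul_of_nonneg_left hs1 hc2
      have hcs : (x ⬝ᵥ u)^2 ≤ (∑ i, (x i)^2) * Uc := by
        have h := Finset.sum_mul_sq_le_sq_mul_sq Finset.univ x
          (fun i => if (i.1:ℕ) < ℓ then u i else 0)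
        have e1 : (∑ i, x i * (if (i.1:ℕ) < ℓ then u i else 0)) = x ⬝ᵥ u := by
          rw [show x ⬝ᵥ u = ∑ i, x i * u i from rfl]
          refine Finset.sum_congr rfl fun i _ => ?_
          by_cases hi : (i.1:ℕ) < ℓ
          · rw [if_pos hi]
          · rw [if_neg hi, hx0 i hi, zero_mul, zero_mul]
        have e2 : (∑ i, (if (i.1:ℕ) < ℓ then u i else 0)^2) = Uc := by
          rw [hUc]
          refine Finset.sum_congr rfl fun i _ => ?_
          by_cases hi : (i.1:ℕ) < ℓ <;> simp [hi]
        rw [e1, e2] at h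
        exact h
      have hXnn : 0 ≤ ∑ i, (x i)^2 := Finset.sum_nonneg fun i _ => sq_nonneg _
      have hAnn : 0 ≤ x ⬝ᵥ u := le_trans (by positivity) hUb
      rw [hsum2] at hxu
      rw [hxu, ← hXv]
      rcases lt_or_eq_of_le hAnn with hApos | hAeq
      · have hσ2ℓpos : (0:ℝ) < σ^(2*ℓ) := pow_pos hσpos _
        have hUle : Uc ≤ 2/c * σ^(2*ℓ) * (x ⬝ᵥ u) := by
          have hpos2 : (0:ℝ) < 2/c * σ^(2*ℓ) := by positivity
          have e3 : (2/c * σ^(2*ℓ)) * (c/2 * ((σ^(2*ℓ))⁻¹ * Uc)) = Uc := by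
            field_simp
          calc Uc = (2/c * σ^(2*ℓ)) * (c/2 * ((σ^(2*ℓ))⁻¹ * Uc)) := e3.symm
            _ ≤ (2/c * σ^(2*ℓ)) * (x ⬝ᵥ u) := mul_le_mul_of_nonneg_left hUb hpos2.le
            _ = 2/c * σ^(2*ℓ) * (x ⬝ᵥ u) := by ring
        have h2c : 2/c ≤ C' := by
          rw [hC'def]; linarith
        have h4 : (x ⬝ᵥ u)^2 ≤ (∑ i, (x i)^2) * (2/c * σ^(2*ℓ) * (x ⬝ᵥ u)) :=
          le_trans hcs (mul_le_mul_of_nonneg_left hUle hXnn)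
        have h5 : x ⬝ᵥ u ≤ 2/c * σ^(2*ℓ) * (∑ i, (x i)^2) := by
          have h6 : (x ⬝ᵥ u) * (x ⬝ᵥ u) ≤ (2/c * σ^(2*ℓ) * (∑ i, (x i)^2)) * (x ⬝ᵥ u) := by
            nlinarith [h4]
          exact le_of_mul_le_mul_right h6 hApos
        have h7 := mul_le_mul_of_nonneg_right h2c (mul_nonneg hσ2ℓpos.le hXnn)
        calc x ⬝ᵥ u ≤ 2/c * σ^(2*ℓ) * (∑ i, (x i)^2) := h5
          _ = 2/c * (σ^(2*ℓ) * ∑ i, (x i)^2) := by ring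
          _ ≤ C' * (σ^(2*ℓ) * ∑ i, (x i)^2) := h7
          _ = C' * σ^(2*ℓ) * ∑ i, (x i)^2 := by ring
      · rw [← hAeq]
        have : (0:ℝ) ≤ C' * σ^(2*ℓ) * ∑ i, (x i)^2 :=
          mul_nonneg (mul_nonneg hC'pos.le (pow_nonneg hσpos.le _)) hXnn
        linarith
end
end
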